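/- arXiv:2207.05599 — 4 statements merged into one kernel-verified Lean document; each statement's English description precedes it below -/
import Mathlib

section
/- For all integers r ≥ 1 and c ≥ 1, the Sprague–Grundy value of the Downright game on the gamma partition Γ_{r,c} equals 0 if both c and r are odd; equals 2 if c and r have different parity and c > 1 and r > 1; and equals 1 otherwise. -/
/-- The subpartition `λ[i,j]`: drop the first `i` rows, subtract `j` from each
remaining row, and delete all nonpositive entries. -/
def Subpart (l : List ℕ) (i j : ℕ) : List ℕ :=
  ((l.drop i).map (fun x => x - j)).filter (fun x => x ≠ 0)

/-- A partition: a nonincreasing finite list of positive integers. -/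
def IsPartition (l : List ℕ) : Prop :=
  l.Pairwise (· ≥ ·) ∧ ∀ x ∈ l, 0 < x

/-- Minimum excluded value of a finite set of naturals. -/
noncomputable def mex (s : Finset ℕ) : ℕ := sInf {n : ℕ | n ∉ s}

lemma measure_filter_le (l : List ℕ) :
    (l.filter (fun x => x ≠ 0)).sum + (l.filter (fun x => x ≠ 0)).length
      ≤ l.sum + l.length := by
  induction l with
  | nil => simp
  | cons a t ih =>
    simp only [List.filter_cons, decide_eq_true_eq, List.sum_cons, List.length_cons]
    by_cases h : a ≠ 0
    · rw [if_pos h]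
      simp only [List.sum_cons, List.length_cons]
      omega
    · rw [if_neg h]
      omega

lemma measure_mapsub_le (l : List ℕ) :
    ((l.map (fun x => x - 1)).filter (fun x => x ≠ 0)).sum
      + ((l.map (fun x => x - 1)).filter (fun x => x ≠ 0)).length ≤ l.sum := by
  induction l with
  | nil => simp
  | cons a t ih =>
    simp only [List.map_cons, List.filter_cons, decide_eq_true_eq, List.sum_cons]
    by_cases h : a - 1 ≠ 0
    · rw [if_pos h]
      simp only [List.sum_cons, List.length_cons]
      omega
    · rw [if_neg h]
      omega

lemma subpart10_lt (a : ℕ) (t : List ℕ) :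
    (Subpart (a :: t) 1 0).sum + (Subpart (a :: t) 1 0).length
      < (a :: t).sum + (a :: t).length := by
  have h : Subpart (a :: t) 1 0 = t.filter (fun x => x ≠ 0) := by
    simp [Subpart]
  rw [h]
  have := measure_filter_le t
  simp only [List.sum_cons, List.length_cons]
  omega

lemma subpart01_lt (a : ℕ) (t : List ℕ) :
    (Subpart (a :: t) 0 1).sum + (Subpart (a :: t) 0 1).length
      < (a :: t).sum + (a :: t).length := by
  have h : Subpart (a :: t) 0 1
      = ((a :: t).map (fun x => x - 1)).filter (fun x => x ≠ 0) := by
    simp [Subpart]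
  rw [h]
  have := measure_mapsub_le (a :: t)
  have hlen : 0 < (a :: t).length := by simp
  omega

/-- Sprague–Grundy values of the LCTR game. -/
noncomputable def SGL : List ℕ → ℕ
  | [] => 0
  | a :: t => mex {SGL (Subpart (a :: t) 1 0), SGL (Subpart (a :: t) 0 1)}
  termination_by l => l.sum + l.length
  decreasing_by
  · exact subpart10_lt a t
  · exact subpart01_lt a t

/-- Sprague–Grundy values of the Downright game (only meaningful on nonempty
partitions; the value on `[]` is a junk value). -/
noncomputable def SGD : List ℕ → ℕ
  | [] => 0
  | a :: t =>
      mex ((if t = [] then (∅ : Finset ℕ) else {SGD (Subpart (a :: t) 1 0)}) ∪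
           (if a ≤ 1 then (∅ : Finset ℕ) else {SGD (Subpart (a :: t) 0 1)}))
  termination_by l => l.sum + l.length
  decreasing_by
  · exact subpart10_lt a t
  · exact subpart01_lt a t

/-- Durfee length: the largest `ℓ` with `λ_ℓ ≥ ℓ`. -/
def durfee (l : List ℕ) : ℕ :=
  Nat.findGreatest (fun k => k ≤ l.getD (k - 1) 0) l.length

/-- The conjugate partition. -/
def conj (l : List ℕ) : List ℕ :=
  (List.range (l.headD 0)).map (fun i => (l.filter (fun x => i + 1 ≤ x)).length)

/-- P-positions of misère LCTR. -/
def PmLCTR : List ℕ → Prop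
  | [] => False
  | a :: t => ¬ PmLCTR (Subpart (a :: t) 1 0) ∧ ¬ PmLCTR (Subpart (a :: t) 0 1)
  termination_by l => l.sum + l.length
  decreasing_by
  · exact subpart10_lt a t
  · exact subpart01_lt a t

/-- Number of nodes in the game tree of LCTR. -/
def nodesL : List ℕ → ℕ
  | [] => 1
  | a :: t => 1 + nodesL (Subpart (a :: t) 1 0) + nodesL (Subpart (a :: t) 0 1)
  termination_by l => l.sum + l.length
  decreasing_by
  · exact subpart10_lt a t
  · exact subpart01_lt a t

/-- Number of leaves in the game tree of LCTR. -/
def leavesL : List ℕ → ℕ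
  | [] => 1
  | a :: t => leavesL (Subpart (a :: t) 1 0) + leavesL (Subpart (a :: t) 0 1)
  termination_by l => l.sum + l.length
  decreasing_by
  · exact subpart10_lt a t
  · exact subpart01_lt a t

/-- Number of nodes in the game tree of Downright (junk value `0` on `[]`). -/
def nodesD : List ℕ → ℕ
  | [] => 0
  | a :: t =>
      1 + (if t = [] then 0 else nodesD (Subpart (a :: t) 1 0))
        + (if a ≤ 1 then 0 else nodesD (Subpart (a :: t) 0 1))
  termination_by l => l.sum + l.length
  decreasing_by
  · exact subpart10_lt a t
  · exact subpart01_lt a t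

/-- Number of leaves in the game tree of Downright (junk value `0` on `[]`). -/
def leavesD : List ℕ → ℕ
  | [] => 0
  | a :: t =>
      if t = [] ∧ a ≤ 1 then 1
      else (if t = [] then 0 else leavesD (Subpart (a :: t) 1 0))
        + (if a ≤ 1 then 0 else leavesD (Subpart (a :: t) 0 1))
  termination_by l => l.sum + l.length
  decreasing_by
  · exact subpart10_lt a t
  · exact subpart01_lt a t

/-- The staircase partition `(n, n-1, …, 1)`. -/
def staircase (n : ℕ) : List ℕ := (List.range n).map (fun k => n - k)

/-- The gamma partition `Γ_{r,c} = (c, 1, …, 1)` with `r` parts. -/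
def gammaPart (r c : ℕ) : List ℕ := c :: List.replicate (r - 1) 1

/-- The rectangular partition `R_{r,c} = (c, …, c)` with `r` parts. -/
def rectPart (r c : ℕ) : List ℕ := List.replicate r c


lemma mex_eq_of (s : Finset ℕ) (k : ℕ) (hk : k ∉ s) (h : ∀ m < k, m ∈ s) :
    mex s = k := by
  unfold mex
  refine le_antisymm (Nat.sInf_le hk) ?_
  by_contra hlt
  push_neg at hlt
  exact (Nat.sInf_mem (⟨k, hk⟩ : Set.Nonempty {n | n ∉ s})) (h _ hlt)

lemma sub10_gamma (c r : ℕ) : Subpart (c :: List.replicate r 1) 1 0 = List.replicate r 1 := by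
  simp [Subpart]

lemma sub01_gamma (c r : ℕ) (hc : 2 ≤ c) :
    Subpart (c :: List.replicate r 1) 0 1 = [c - 1] := by
  simp [Subpart, List.filter_cons, show ¬(c-1=0) by omega, List.filter_replicate]

lemma SGD_single (c : ℕ) (hc : 1 ≤ c) : SGD [c] = if Odd c then 0 else 1 := by
  induction c with
  | zero => omega
  | succ n ih =>
    rw [SGD]
    by_cases hn : n = 0
    · subst hn; norm_num
      exact mex_eq_of ∅ 0 (by simp) (by omega)
    · have h2 : ¬ (n + 1 ≤ 1) := by omega
      rw [if_pos rfl, if_neg h2]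
      have : Subpart [n+1] 0 1 = [n] := by
        have := sub01_gamma (n+1) 0 (by omega)
        simpa using this
      rw [this, ih (by omega)]
      rcases Nat.even_or_odd n with he | ho
      · have h1 : ¬ Odd n := by simp [Nat.not_odd_iff_even, he]
        have h3 : Odd (n+1) := Even.add_one he
        rw [if_neg h1, if_pos h3]
        refine mex_eq_of _ 0 (by simp) (by omega)
      · have h1 : Odd n := ho
        have h3 : ¬ Odd (n+1) := by simp [Nat.not_odd_iff_even]; exact ho.add_one
        rw [if_pos h1, if_neg h3]
        refine mex_eq_of _ 1 (by simp) ?_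
        intro m hm
        interval_cases m
        simp

lemma SGD_col (r : ℕ) (hr : 1 ≤ r) :
    SGD (1 :: List.replicate (r - 1) 1) = if Odd r then 0 else 1 := by
  induction r with
  | zero => omega
  | succ n ih =>
    rw [SGD]
    by_cases hn : n = 0
    · subst hn; norm_num
      exact mex_eq_of ∅ 0 (by simp) (by omega)
    · have ht : (List.replicate (n + 1 - 1) 1) ≠ [] := by
        simp [List.replicate]; omega
      rw [if_neg ht, if_pos (le_refl 1)]
      rw [sub10_gamma]
      have hrep : List.replicate (n + 1 - 1) 1 = 1 :: List.replicate (n - 1) 1 := by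
        cases n with
        | zero => omega
        | succ m => simp [List.replicate_succ]
      rw [hrep, ih (by omega)]
      rcases Nat.even_or_odd n with he | ho
      · have h1 : ¬ Odd n := by simp [Nat.not_odd_iff_even, he]
        have h3 : Odd (n+1) := Even.add_one he
        rw [if_neg h1, if_pos h3]
        simpa using mex_eq_of {1} 0 (by simp) (by omega)
      · have h3 : ¬ Odd (n+1) := by simp [Nat.not_odd_iff_even]; exact ho.add_one
        rw [if_pos ho, if_neg h3]
        have : mex ({0} : Finset ℕ) = 1 := by
          refine mex_eq_of {0} 1 (by simp) ?_
          intro m hm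
          interval_cases m
          simp
        simpa using this

/-- Sprague–Grundy values of Downright on the gamma partitions. -/
theorem stmt2 (r c : ℕ) (hr : 1 ≤ r) (hc : 1 ≤ c) :
    SGD (gammaPart r c) =
      if Odd c ∧ Odd r then 0
      else if (¬ (Odd c ↔ Odd r)) ∧ 1 < c ∧ 1 < r then 2
      else 1 := by
  rcases Nat.lt_or_ge r 2 with hr1 | hr2
  · have : r = 1 := by omega
    subst this
    have h1 : Odd 1 := by decide
    simp only [gammaPart]
    norm_num
    simpa using SGD_single c hc
  · rcases Nat.lt_or_ge c 2 with hc1 | hc2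
    · have : c = 1 := by omega
      subst this
      have key : SGD (gammaPart r 1) = if Odd r then 0 else 1 := SGD_col r hr
      rw [key]
      have h1 : Odd 1 := ⟨0, rfl⟩
      by_cases ho : Odd r
      · rw [if_pos ho, if_pos ⟨h1, ho⟩]
      · rw [if_neg ho, if_neg (by tauto), if_neg (fun h => absurd h.2.1 (lt_irrefl 1))]
    · have ht : List.replicate (r - 1) 1 ≠ [] := by simp; omega
      have ha : ¬ c ≤ 1 := by omega
      rw [show gammaPart r c = c :: List.replicate (r - 1) 1 from rfl, SGD, if_neg ht,
          if_neg ha, sub10_gamma, sub01_gamma c (r - 1) hc2]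
      have hrep : List.replicate (r - 1) 1 = 1 :: List.replicate (r - 1 - 1) 1 := by
        cases r with
        | zero => omega
        | succ m =>
          cases m with
          | zero => omega
          | succ k => simp [List.replicate_succ]
      rw [hrep, SGD_col (r - 1) (by omega), SGD_single (c - 1) (by omega)]
      have hiff_r : Odd (r - 1) ↔ ¬ Odd r := by
        rw [Nat.odd_sub (by omega)]
        simp [Nat.odd_iff, Nat.even_iff]
      have hiff_c : Odd (c - 1) ↔ ¬ Odd c := by
        rw [Nat.odd_sub (by omega)]
        simp [Nat.odd_iff, Nat.even_iff]
      rcases Nat.even_or_odd r with her | hor <;> rcases Nat.even_or_odd c with hec | hoc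
      · have h1 : ¬ Odd r := by simp [Nat.not_odd_iff_even, her]
        have h2 : ¬ Odd c := by simp [Nat.not_odd_iff_even, hec]
        rw [if_pos (hiff_r.2 h1), if_pos (hiff_c.2 h2),
            if_neg (by tauto), if_neg (by tauto)]
        exact mex_eq_of _ 1 (by decide) (by intro m hm; interval_cases m; decide)
      · have h1 : ¬ Odd r := by simp [Nat.not_odd_iff_even, her]
        rw [if_pos (hiff_r.2 h1), if_neg (by simpa [hiff_c] using hoc),
            if_neg (by tauto), if_pos ⟨by tauto, by omega, by omega⟩]
        exact mex_eq_of _ 2 (by decide) (by intro m hm; interval_cases m <;> decide)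
      · have h2 : ¬ Odd c := by simp [Nat.not_odd_iff_even, hec]
        rw [if_neg (by simpa [hiff_r] using hor), if_pos (hiff_c.2 h2),
            if_neg (by tauto), if_pos ⟨by tauto, by omega, by omega⟩]
        exact mex_eq_of _ 2 (by decide) (by intro m hm; interval_cases m <;> decide)
      · rw [if_neg (by simpa [hiff_r] using hor), if_neg (by simpa [hiff_c] using hoc),
            if_pos ⟨hoc, hor⟩]
        exact mex_eq_of _ 0 (by decide) (by omega)
end

section
/- Let λ be a nonempty partition with Durfee length ℓ = d(λ). Then for every integer k with 0 ≤ k ≤ ℓ−1, the Sprague–Grundy value of the Downright game satisfies SG_D(λ[k,k]) = SG_D(λ); that is, SG_D(λ) = SG_D(λ[1,1]) = SG_D(λ[2,2]) = ⋯ = SG_D(λ[ℓ−1,ℓ−1]). -/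
/-! ### mex lemmas -/

lemma mex_eq (s : Finset ℕ) (m : ℕ) (hm : m ∉ s) (h : ∀ k < m, k ∈ s) : mex s = m := by
  unfold mex
  apply le_antisymm
  · exact Nat.sInf_le hm
  · apply le_csInf ⟨m, hm⟩
    intro k hk
    by_contra hlt
    exact hk (h k (by omega))

lemma mex_empty : mex (∅ : Finset ℕ) = 0 := mex_eq _ 0 (by simp) (by omega)

lemma mex_pair (x y : ℕ) :
    mex {x, y} = if x ≠ 0 ∧ y ≠ 0 then 0 else if x ≠ 1 ∧ y ≠ 1 then 1 else 2 := by
  split_ifs with h1 h2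
  · exact mex_eq _ 0 (by simp; omega) (by omega)
  · exact mex_eq _ 1 (by simp; omega) (by intro k hk; simp; omega)
  · exact mex_eq _ 2 (by simp; omega) (by intro k hk; simp; omega)

lemma mex_singleton (x : ℕ) :
    mex {x} = if x ≠ 0 then 0 else 1 := by
  have : ({x} : Finset ℕ) = {x, x} := by simp
  rw [this, mex_pair]
  split_ifs <;> omega

/-! ### sorted list lemmas -/

lemma getD_zero_of_all {t : List ℕ} (h : ∀ x ∈ t, x = 0) (i : ℕ) : t.getD i 0 = 0 := by
  induction t generalizing i with
  | nil => simp
  | cons a s ih =>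
    cases i with
    | zero => simpa using h a (by simp)
    | succ j => exact ih (fun x hx => h x (by simp [hx])) j

lemma sorted_filter_getD {l : List ℕ} (h : l.Pairwise (· ≥ ·)) (i : ℕ) :
    (l.filter (fun x => x ≠ 0)).getD i 0 = l.getD i 0 := by
  induction l generalizing i with
  | nil => simp
  | cons a t ih =>
    rw [List.pairwise_cons] at h
    by_cases ha : a = 0
    · have hall : ∀ x ∈ t, x = 0 := fun x hx => by have := h.1 x hx; omega
      have : (a :: t).filter (fun x => x ≠ 0) = [] := by
        rw [List.filter_eq_nil_iff]
        intro x hx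
        simp only [List.mem_cons] at hx
        rcases hx with rfl | hx
        · simp [ha]
        · simp [hall x hx]
      rw [this]
      cases i with
      | zero => simp [ha]
      | succ j => simpa using (getD_zero_of_all hall j).symm
    · have : (a :: t).filter (fun x => x ≠ 0) = a :: t.filter (fun x => x ≠ 0) := by
        simp [List.filter_cons, ha]
      rw [this]
      cases i with
      | zero => simp
      | succ j => simpa using ih h.2 j

lemma sorted_filter_decomp {l : List ℕ} (h : l.Pairwise (· ≥ ·)) :
    ∃ n, l = l.filter (fun x => x ≠ 0) ++ List.replicate n 0 := by
  induction l with
  | nil => exact ⟨0, by simp⟩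
  | cons a t ih =>
    rw [List.pairwise_cons] at h
    by_cases ha : a = 0
    · have hall : ∀ x ∈ t, x = 0 := fun x hx => by have := h.1 x hx; omega
      have hfil : (a :: t).filter (fun x => x ≠ 0) = [] := by
        rw [List.filter_eq_nil_iff]
        intro x hx
        simp only [List.mem_cons] at hx
        rcases hx with rfl | hx
        · simp [ha]
        · simp [hall x hx]
      refine ⟨t.length + 1, ?_⟩
      rw [hfil]
      subst ha
      simp [List.replicate_succ]
      exact List.eq_replicate_of_mem hall
    · obtain ⟨n, hn⟩ := ih h.2
      refine ⟨n, ?_⟩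
      have : (a :: t).filter (fun x => x ≠ 0) = a :: t.filter (fun x => x ≠ 0) := by
        simp [List.filter_cons, ha]
      rw [this]
      simpa using hn

lemma sorted_mapsub {l : List ℕ} (h : l.Pairwise (· ≥ ·)) (j : ℕ) :
    (l.map (fun x => x - j)).Pairwise (· ≥ ·) :=
  List.Pairwise.map _ (fun a b hab => Nat.sub_le_sub_right hab j) h

lemma sorted_subpart_aux {l : List ℕ} (h : l.Pairwise (· ≥ ·)) (i j : ℕ) :
    ((l.drop i).map (fun x => x - j)).Pairwise (· ≥ ·) :=
  sorted_mapsub (List.Pairwise.sublist (List.drop_sublist i l) h) j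

lemma subpart_sorted {l : List ℕ} (h : l.Pairwise (· ≥ ·)) (i j : ℕ) :
    (Subpart l i j).Pairwise (· ≥ ·) :=
  List.Pairwise.sublist List.filter_sublist (sorted_subpart_aux h i j)

lemma subpart_isPartition {l : List ℕ} (h : IsPartition l) (i j : ℕ) :
    IsPartition (Subpart l i j) := by
  refine ⟨subpart_sorted h.1 i j, ?_⟩
  intro x hx
  have := List.of_mem_filter hx
  simp at this
  omega
/-! ### Subpart composition and getD -/

lemma filter_map_zeros (j' i' n : ℕ) :
    List.filter (fun x => x ≠ 0)
      (List.map (fun x => x - j') (List.drop i' (List.replicate n 0))) = [] := by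
  rw [List.drop_replicate, List.map_replicate, List.filter_replicate]
  simp

lemma subpart_comp {l : List ℕ} (h : l.Pairwise (· ≥ ·)) (i j i' j' : ℕ) :
    Subpart (Subpart l i j) i' j' = Subpart l (i + i') (j + j') := by
  have hs : ((l.drop i).map (fun x => x - j)).Pairwise (· ≥ ·) := sorted_subpart_aux h i j
  set s := (l.drop i).map (fun x => x - j) with hs_def
  obtain ⟨n, hn⟩ := sorted_filter_decomp hs
  have key : ∀ m : List ℕ, Subpart (m ++ List.replicate n 0) i' j' = Subpart m i' j' := by
    intro m
    unfold Subpart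
    rw [List.drop_append, List.map_append, List.filter_append,
      filter_map_zeros, List.append_nil]
  have h1 : Subpart l i j = s.filter (fun x => x ≠ 0) := by
    unfold Subpart; rfl
  have h2 : Subpart l (i + i') (j + j') = Subpart s i' j' := by
    unfold Subpart
    rw [← List.drop_drop, hs_def, ← List.map_drop, List.map_map]
    congr 1
    apply List.map_congr_left
    intro x _
    simp [Nat.sub_sub]
  rw [h1, h2, ← key (s.filter (fun x => x ≠ 0)), ← hn]

lemma getD_map_sub (t : List ℕ) (j m : ℕ) :
    (t.map (fun x => x - j)).getD m 0 = t.getD m 0 - j := by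
  simp only [List.getD_eq_getElem?_getD, List.getElem?_map]
  cases t[m]? <;> simp

lemma subpart_getD {l : List ℕ} (h : l.Pairwise (· ≥ ·)) (i j m : ℕ) :
    (Subpart l i j).getD m 0 = l.getD (i + m) 0 - j := by
  unfold Subpart
  rw [sorted_filter_getD (sorted_subpart_aux h i j), getD_map_sub]
  congr 1
  simp only [List.getD_eq_getElem?_getD, List.getElem?_drop]

lemma getD_anti {l : List ℕ} (h : l.Pairwise (· ≥ ·)) {i j : ℕ} (hij : i ≤ j) :
    l.getD j 0 ≤ l.getD i 0 := by
  by_cases hj : j < l.length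
  · have hi : i < l.length := lt_of_le_of_lt hij hj
    rw [List.getD_eq_getElem _ _ hj, List.getD_eq_getElem _ _ hi]
    rcases eq_or_lt_of_le hij with rfl | hlt
    · exact le_refl _
    · exact List.pairwise_iff_getElem.1 h i j hi hj hlt
  · rw [List.getD_eq_default _ _ (by omega)]
    exact Nat.zero_le _

lemma getD_ne_lt_length {l : List ℕ} {i : ℕ} (h : l.getD i 0 ≠ 0) : i < l.length := by
  by_contra hc
  rw [List.getD_eq_default _ _ (by omega)] at h
  exact h rfl

/-! ### Durfee characterization -/

lemma durfee_ge_iff {l : List ℕ} (h : l.Pairwise (· ≥ ·)) {m : ℕ} (hm : 1 ≤ m) :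
    m ≤ durfee l ↔ m ≤ l.getD (m - 1) 0 := by
  constructor
  · intro hd
    have hspec : durfee l ≤ l.getD (durfee l - 1) 0 := by
      unfold durfee
      exact Nat.findGreatest_spec (P := fun k => k ≤ l.getD (k - 1) 0) (m := 0)
        (Nat.zero_le _) (Nat.zero_le _)
    calc m ≤ durfee l := hd
      _ ≤ l.getD (durfee l - 1) 0 := hspec
      _ ≤ l.getD (m - 1) 0 := getD_anti h (by omega)
  · intro hg
    have hlen : m - 1 < l.length := getD_ne_lt_length (by omega)
    exact Nat.le_findGreatest (by omega) hg
/-! ### Gamma partition values -/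

def gam (r c : ℕ) : ℕ :=
  if r = 1 then (c + 1) % 2
  else if c = 1 then (r + 1) % 2
  else if r % 2 = c % 2 then 1 - r % 2
  else 2

lemma sub_gamma_10 (c k : ℕ) :
    Subpart (c :: List.replicate k 1) 1 0 = List.replicate k 1 := by
  unfold Subpart
  simp [List.filter_replicate]

lemma sub_gamma_01 (c k : ℕ) (hc : 2 ≤ c) :
    Subpart (c :: List.replicate k 1) 0 1 = [c - 1] := by
  unfold Subpart
  simp [List.filter_replicate, List.filter_cons]
  omega

set_option maxHeartbeats 1000000 in
lemma gam_val : ∀ n r c, r + c ≤ n → 1 ≤ r → 1 ≤ c → SGD (gammaPart r c) = gam r c := by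
  intro n
  induction n with
  | zero => intro r c h hr hc; omega
  | succ n ih =>
    intro r c h hr hc
    unfold gammaPart
    rcases Nat.lt_or_ge r 2 with hr2 | hr2
    · have hr1 : r = 1 := by omega
      subst hr1
      simp only [Nat.sub_self, List.replicate_zero]
      rw [SGD]
      rcases Nat.lt_or_ge c 2 with hc2 | hc2
      · have : c = 1 := by omega
        subst this
        simp [mex_empty, gam]
      · rw [if_pos rfl, if_neg (by omega)]
        have hsub : Subpart (c :: ([] : List ℕ)) 0 1 = [c - 1] := by
          have := sub_gamma_01 c 0 hc2
          simpa using this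
        rw [hsub]
        have hg : SGD [c - 1] = gam 1 (c - 1) := by
          have := ih 1 (c - 1) (by omega) (by omega) (by omega)
          simpa [gammaPart] using this
        rw [Finset.empty_union, hg, mex_singleton]
        unfold gam
        split_ifs <;> omega
    · have hrep : List.replicate (r - 1) 1 = 1 :: List.replicate (r - 2) 1 := by
        have : r - 1 = (r - 2) + 1 := by omega
        rw [this, List.replicate_succ]
      rw [hrep, SGD, ← hrep]
      rw [if_neg (by rw [hrep]; simp)]
      rw [sub_gamma_10]
      have hg1 : SGD (List.replicate (r - 1) 1) = gam (r - 1) 1 := by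
        have := ih (r - 1) 1 (by omega) (by omega) (by omega)
        have e : gammaPart (r - 1) 1 = List.replicate (r - 1) 1 := by
          unfold gammaPart
          rw [hrep]
          congr 1
        rwa [e] at this
      rcases Nat.lt_or_ge c 2 with hc2 | hc2
      · have : c = 1 := by omega
        subst this
        rw [if_pos (by omega), Finset.union_empty, hg1, mex_singleton]
        unfold gam
        split_ifs <;> omega
      · rw [if_neg (by omega), sub_gamma_01 _ _ hc2]
        have hg2 : SGD [c - 1] = gam 1 (c - 1) := by
          have := ih 1 (c - 1) (by omega) (by omega) (by omega)
          simpa [gammaPart] using this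
        rw [hg1, hg2, ← Finset.insert_eq, mex_pair]
        unfold gam
        split_ifs <;> omega

lemma gam_1c (c : ℕ) : gam 1 c = (c + 1) % 2 := if_pos rfl
lemma gam_r1 (r : ℕ) : gam r 1 = (r + 1) % 2 := by
  unfold gam; split_ifs <;> omega
lemma gam_big (r c : ℕ) (hr : 2 ≤ r) (hc : 2 ≤ c) :
    gam r c = if r % 2 = c % 2 then 1 - r % 2 else 2 := by
  unfold gam; rw [if_neg (by omega), if_neg (by omega)]

set_option maxHeartbeats 1000000 in
lemma key_arith (p q b a : ℕ) (hb : 2 ≤ b) (ha : b ≤ a) :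
    mex {(if p = 0 then gam (q + 1) b else gam p 1),
         (if b = 2 then gam (p + 2) (a - 1) else gam 1 (b - 2))} = gam (p + 1) (b - 1) := by
  have eA : (if p = 0 then gam (q + 1) b else gam p 1)
      = if p = 0 then (if q = 0 then (b + 1) % 2
          else if (q + 1) % 2 = b % 2 then 1 - (q + 1) % 2 else 2)
        else (p + 1) % 2 := by
    by_cases hp : p = 0
    · simp only [hp, if_true]
      by_cases hq : q = 0
      · simp only [hq, if_true]
        rw [show (0 : ℕ) + 1 = 1 by rfl, gam_1c]
      · simp only [hq, if_false]
        rw [gam_big _ _ (by omega) hb]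
    · simp only [hp, if_false]
      rw [gam_r1]
  have eB : (if b = 2 then gam (p + 2) (a - 1) else gam 1 (b - 2))
      = if b = 2 then (if a = 2 then (p + 3) % 2
          else if (p + 2) % 2 = (a - 1) % 2 then 1 - (p + 2) % 2 else 2)
        else (b - 1) % 2 := by
    by_cases hb2 : b = 2
    · simp only [hb2, if_true]
      by_cases ha2 : a = 2
      · simp only [ha2, if_true]
        rw [show (2 : ℕ) - 1 = 1 by rfl, gam_r1]
      · simp only [ha2, if_false]
        rw [gam_big _ _ (by omega) (by omega)]
    · simp only [hb2, if_false]
      rw [gam_1c]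
      omega
  have eC : gam (p + 1) (b - 1)
      = if p = 0 then b % 2
        else if b = 2 then (p + 2) % 2
        else if (p + 1) % 2 = (b - 1) % 2 then 1 - (p + 1) % 2 else 2 := by
    by_cases hp : p = 0
    · simp only [hp, if_true]
      rw [show (0 : ℕ) + 1 = 1 by rfl, gam_1c]
      omega
    · simp only [hp, if_false]
      by_cases hb2 : b = 2
      · simp only [hb2, if_true]
        rw [show (2 : ℕ) - 1 = 1 by rfl, gam_r1]
      · simp only [hb2, if_false]
        rw [gam_big _ _ (by omega) (by omega)]
  rw [eA, eB, mex_pair, eC]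
  split_ifs <;> omega
/-! ### Shape lemma -/

lemma shape21 : ∀ t : List ℕ, t.Pairwise (· ≥ ·) → (∀ x ∈ t, 0 < x) → (∀ x ∈ t, x ≤ 2) →
    ∃ p q, t = List.replicate p 2 ++ List.replicate q 1 := by
  intro t
  induction t with
  | nil => exact fun _ _ _ => ⟨0, 0, by simp⟩
  | cons a s ih =>
    intro hs h1 h2
    rw [List.pairwise_cons] at hs
    have ha : a = 1 ∨ a = 2 := by
      have := h1 a (by simp); have := h2 a (by simp); omega
    rcases ha with rfl | rfl
    · have hall : ∀ x ∈ s, x = 1 := fun x hx => by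
        have := hs.1 x hx; have := h1 x (by simp [hx]); omega
      refine ⟨0, s.length + 1, ?_⟩
      rw [List.replicate_succ]
      simpa using List.eq_replicate_of_mem hall
    · obtain ⟨p, q, h⟩ := ih hs.2 (fun x hx => h1 x (by simp [hx]))
        (fun x hx => h2 x (by simp [hx]))
      exact ⟨p + 1, q, by rw [List.replicate_succ]; simp [h]⟩

lemma subpart_10_cons {a : ℕ} {t : List ℕ} (hpos : ∀ x ∈ t, 0 < x) :
    Subpart (a :: t) 1 0 = t := by
  unfold Subpart
  have h1 : (a :: t).drop 1 = t := rfl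
  rw [h1]
  have h2 : t.map (fun x => x - 0) = t := by simp
  rw [h2, List.filter_eq_self]
  intro x hx
  simpa using (hpos x hx).ne'

/-! ### Main diagonal lemma -/

set_option maxHeartbeats 2000000 in
lemma main_diag : ∀ n l, l.sum + l.length ≤ n → IsPartition l → 2 ≤ durfee l →
    SGD (Subpart l 1 1) = SGD l := by
  intro n
  induction n with
  | zero =>
    intro l hm _ hd
    have : l = [] := List.eq_nil_of_length_eq_zero (by omega)
    subst this
    simp [durfee] at hd
  | succ n ih =>
    intro l hm hp hd
    obtain ⟨hsort, hpos⟩ := hp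
    have hb2 : 2 ≤ l.getD 1 0 := (durfee_ge_iff hsort (by omega)).1 hd
    match l, hsort, hpos, hm, hb2 with
    | [], _, _, _, hb2 => simp at hb2
    | [a], _, _, _, hb2 => simp at hb2
    | a :: b :: t, hsort, hpos, hm, hb2 =>
    clear hd
    have hb : 2 ≤ b := by simpa using hb2
    rw [List.pairwise_cons] at hsort
    have hab : b ≤ a := hsort.1 b (by simp)
    have hsort' : (b :: t).Pairwise (· ≥ ·) := hsort.2
    have hpos' : ∀ x ∈ b :: t, 0 < x := fun x hx => hpos x (by simp [hx])
    have hA10 : Subpart (a :: b :: t) 1 0 = b :: t := subpart_10_cons hpos'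
    have hSGDl : SGD (a :: b :: t) =
        mex {SGD (Subpart (a :: b :: t) 1 0), SGD (Subpart (a :: b :: t) 0 1)} := by
      rw [SGD, if_neg (List.cons_ne_nil _ _), if_neg (by omega), ← Finset.insert_eq]
    have hmA : (b :: t).sum + (b :: t).length ≤ n := by
      simp only [List.sum_cons, List.length_cons] at hm ⊢
      omega
    have hmB : (Subpart (a :: b :: t) 0 1).sum + (Subpart (a :: b :: t) 0 1).length ≤ n := by
      have h1 : Subpart (a :: b :: t) 0 1
          = ((a :: b :: t).map (fun x => x - 1)).filter (fun x => x ≠ 0) := by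
        unfold Subpart; rw [List.drop_zero]
      have h2 := measure_mapsub_le (a :: b :: t)
      rw [h1]
      simp only [List.sum_cons, List.length_cons] at hm h2 ⊢
      omega
    have hsortL : (a :: b :: t).Pairwise (· ≥ ·) := by
      rw [List.pairwise_cons]; exact ⟨hsort.1, hsort'⟩
    have hBpart : IsPartition (Subpart (a :: b :: t) 0 1) :=
      subpart_isPartition ⟨hsortL, hpos⟩ 0 1
    by_cases hd3 : 3 ≤ (a :: b :: t).getD 2 0
    -- deep case: durfee ≥ 3
    · have hb3 : 3 ≤ b := le_trans hd3 (by simpa using getD_anti hsortL (show 1 ≤ 2 by omega))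
      -- the value of A
      have h3 : 3 ≤ t[0]?.getD 0 := by simpa using hd3
      have hdurA : 2 ≤ durfee (b :: t) := by
        rw [durfee_ge_iff hsort' (by omega)]
        simp
        omega
      have ihA := ih (b :: t) hmA ⟨hsort', hpos'⟩ hdurA
      have hcompA : Subpart (b :: t) 1 1 = Subpart (a :: b :: t) 2 1 := by
        conv_lhs => rw [← hA10]
        rw [subpart_comp hsortL]
      have hvA : SGD (Subpart (a :: b :: t) 1 0) = SGD (Subpart (a :: b :: t) 2 1) := by
        rw [hA10, ← ihA, hcompA]
      -- the value of B
      have hdurB : 2 ≤ durfee (Subpart (a :: b :: t) 0 1) := by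
        rw [durfee_ge_iff hBpart.1 (by omega)]
        rw [subpart_getD hsortL]
        simp
        omega
      have ihB := ih (Subpart (a :: b :: t) 0 1) hmB hBpart hdurB
      have hcompB : Subpart (Subpart (a :: b :: t) 0 1) 1 1 = Subpart (a :: b :: t) 1 2 := by
        rw [subpart_comp hsortL]
      have hvB : SGD (Subpart (a :: b :: t) 0 1) = SGD (Subpart (a :: b :: t) 1 2) := by
        rw [← ihB, hcompB]
      -- the structure of μ
      have hg0 : 2 ≤ (Subpart (a :: b :: t) 1 1).getD 0 0 := by
        rw [subpart_getD hsortL]; simp; omega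
      have hg1 : 2 ≤ (Subpart (a :: b :: t) 1 1).getD 1 0 := by
        rw [subpart_getD hsortL]; simp; omega
      have hcomp1 : Subpart (Subpart (a :: b :: t) 1 1) 1 0 = Subpart (a :: b :: t) 2 1 := by
        rw [subpart_comp hsortL]
      have hcomp2 : Subpart (Subpart (a :: b :: t) 1 1) 0 1 = Subpart (a :: b :: t) 1 2 := by
        rw [subpart_comp hsortL]
      obtain ⟨x, y, s, hμeq⟩ : ∃ x y s, Subpart (a :: b :: t) 1 1 = x :: y :: s := by
        match hμ : Subpart (a :: b :: t) 1 1, hg0, hg1 with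
        | [], hg0, _ => simp at hg0
        | [x], _, hg1 => simp at hg1
        | x :: y :: s, _, _ => exact ⟨x, y, s, rfl⟩
      have hx2 : 2 ≤ x := by rw [hμeq] at hg0; simpa using hg0
      have hSGDμ : SGD (Subpart (a :: b :: t) 1 1) =
          mex {SGD (Subpart (a :: b :: t) 2 1), SGD (Subpart (a :: b :: t) 1 2)} := by
        conv_lhs => rw [hμeq, SGD]
        rw [if_neg (List.cons_ne_nil _ _), if_neg (by omega), ← Finset.insert_eq,
          ← hμeq, hcomp1, hcomp2]
      rw [hSGDμ, hSGDl, hvA, hvB]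
    -- shallow case: durfee = 2
    · push_neg at hd3
      have hsortt : t.Pairwise (· ≥ ·) := (List.pairwise_cons.mp hsort').2
      have ht2 : ∀ x ∈ t, x ≤ 2 := by
        intro x hx
        obtain ⟨i, hi, rfl⟩ := List.mem_iff_getElem.mp hx
        have e1 : t[i] = t.getD i 0 := (List.getD_eq_getElem t 0 hi).symm
        rw [e1]
        calc t.getD i 0 ≤ t.getD 0 0 := getD_anti hsortt (Nat.zero_le i)
          _ = (a :: b :: t).getD 2 0 := rfl
          _ ≤ 2 := by omega
      obtain ⟨p, q, htpq⟩ := shape21 t hsortt (fun x hx => hpos x (by simp [hx])) ht2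
      subst htpq
      have ha2 : 2 ≤ a := le_trans hb hab
      have hb1 : (b - 1) ≠ 0 := by omega
      have ha1 : (a - 1) ≠ 0 := by omega
      have c3 : Subpart (a :: b :: (List.replicate p 2 ++ List.replicate q 1)) 1 1
          = (b - 1) :: List.replicate p 1 := by
        simp [Subpart, List.filter_replicate, hb1]
      have c2 : Subpart (a :: b :: (List.replicate p 2 ++ List.replicate q 1)) 0 1
          = (a - 1) :: (b - 1) :: List.replicate p 1 := by
        simp [Subpart, List.filter_replicate, ha1, hb1]
      have hγμ : gammaPart (p + 1) (b - 1) = (b - 1) :: List.replicate p 1 := by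
        simp [gammaPart]
      have vμ : SGD (Subpart (a :: b :: (List.replicate p 2 ++ List.replicate q 1)) 1 1)
          = gam (p + 1) (b - 1) := by
        rw [c3, ← hγμ, gam_val (p + 1 + (b - 1)) _ _ le_rfl (by omega) (by omega)]
      have vA : SGD (Subpart (a :: b :: (List.replicate p 2 ++ List.replicate q 1)) 1 0)
          = if p = 0 then gam (q + 1) b else gam p 1 := by
        rw [hA10]
        by_cases hp0 : p = 0
        · subst hp0
          rw [if_pos rfl]
          have e : (b :: (List.replicate 0 2 ++ List.replicate q 1)) = gammaPart (q + 1) b := by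
            simp [gammaPart]
          rw [e, gam_val (q + 1 + b) _ _ le_rfl (by omega) (by omega)]
        · rw [if_neg hp0]
          have e : (List.replicate p 2 ++ List.replicate q 1).getD 0 0 = 2 := by
            rw [show p = (p - 1) + 1 by omega, List.replicate_succ]
            simp
          have hdurA : 2 ≤ durfee (b :: (List.replicate p 2 ++ List.replicate q 1)) := by
            rw [durfee_ge_iff hsort' (by omega)]
            show 2 ≤ (List.replicate p 2 ++ List.replicate q 1).getD 0 0
            omega
          have ihA := ih _ hmA ⟨hsort', hpos'⟩ hdurA
          rw [← ihA]
          have e2 : Subpart (b :: (List.replicate p 2 ++ List.replicate q 1)) 1 1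
              = List.replicate p 1 := by
            simp [Subpart, List.filter_replicate]
          have e3 : List.replicate p 1 = gammaPart p 1 := by
            simp only [gammaPart]
            rw [show p = (p - 1) + 1 by omega, List.replicate_succ]
            simp
          rw [e2, e3, gam_val (p + 1) _ _ le_rfl (by omega) le_rfl]
      have vB : SGD (Subpart (a :: b :: (List.replicate p 2 ++ List.replicate q 1)) 0 1)
          = if b = 2 then gam (p + 2) (a - 1) else gam 1 (b - 2) := by
        by_cases hbb : b = 2
        · rw [if_pos hbb, c2, hbb]
          have e : (a - 1) :: (2 - 1) :: List.replicate p 1 = gammaPart (p + 2) (a - 1) := by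
            simp [gammaPart, List.replicate_succ]
          rw [e, gam_val (p + 2 + (a - 1)) _ _ le_rfl (by omega) (by omega)]
        · rw [if_neg hbb]
          have hb3 : 3 ≤ b := by omega
          have hdurB : 2 ≤ durfee
              (Subpart (a :: b :: (List.replicate p 2 ++ List.replicate q 1)) 0 1) := by
            rw [durfee_ge_iff hBpart.1 (by omega), c2]
            show 2 ≤ b - 1
            omega
          have ihB := ih _ hmB hBpart hdurB
          rw [← ihB, c2]
          have hbb2 : (b - 1 - 1) ≠ 0 := by omega
          have e2 : Subpart ((a - 1) :: (b - 1) :: List.replicate p 1) 1 1 = [b - 2] := by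
            simp [Subpart, List.filter_replicate, hbb2]
            omega
          rw [e2]
          have e3 : [b - 2] = gammaPart 1 (b - 2) := by simp [gammaPart]
          rw [e3, gam_val (1 + (b - 2)) _ _ le_rfl le_rfl (by omega)]
      rw [hSGDl, vμ, vA, vB]
      exact (key_arith p q b a hb hab).symm
/-- for a nonempty partition `λ` with Durfee length `ℓ`, the
Sprague–Grundy value of Downright satisfies `SG_D(λ[k,k]) = SG_D(λ)` for all
`0 ≤ k ≤ ℓ - 1`. -/
theorem stmt8 (l : List ℕ) (hp : IsPartition l) (hne : l ≠ []) (k : ℕ)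
    (hk : k ≤ durfee l - 1) :
    SGD (Subpart l k k) = SGD l := by
  induction k with
  | zero =>
    have h0 : Subpart l 0 0 = l := by
      unfold Subpart
      rw [List.drop_zero]
      have h2 : l.map (fun x => x - 0) = l := by simp
      rw [h2, List.filter_eq_self]
      intro x hx
      simpa using (hp.2 x hx).ne'
    rw [h0]
  | succ k ih =>
    have hk' : k ≤ durfee l - 1 := by omega
    have hd : k + 2 ≤ durfee l := by omega
    have hgd : k + 2 ≤ l.getD (k + 1) 0 := by
      have := (durfee_ge_iff hp.1 (show 1 ≤ k + 2 by omega)).1 hd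
      simpa using this
    have hpart := subpart_isPartition hp k k
    have hdur2 : 2 ≤ durfee (Subpart l k k) := by
      rw [durfee_ge_iff hpart.1 (by omega), subpart_getD hp.1]
      show 2 ≤ l.getD (k + 1) 0 - k
      omega
    have hmain := main_diag ((Subpart l k k).sum + (Subpart l k k).length) _ le_rfl hpart hdur2
    have hcomp : Subpart (Subpart l k k) 1 1 = Subpart l (k + 1) (k + 1) := by
      rw [subpart_comp hp.1]
    rw [← hcomp, hmain, ih hk']
end

section
/- Let λ be a partition and let i, j ≥ 1 be integers such that λ[i,j] is a nonempty partition. Then for the Sprague–Grundy values of the LCTR game: (1) if SG_L(λ[i,j]) = 0 then SG_L(λ[i−1,j−1]) = 0; (2) if SG_L(λ[i,j]) = 1 and d(λ[i,j]) ≥ 2 then SG_L(λ[i−1,j−1]) = 1; (3) if SG_L(λ[i,j]) = 2 and d(λ[i,j]) ≥ 3 then SG_L(λ[i−1,j−1]) = 2. -/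
lemma mex_notMem (s : Finset ℕ) : mex s ∉ s := by
  have h : {n : ℕ | n ∉ s}.Nonempty := by
    obtain ⟨a, ha⟩ := Infinite.exists_notMem_finset s
    exact ⟨a, ha⟩
  exact Nat.sInf_mem h

lemma mex_le {s : Finset ℕ} {a : ℕ} (h : a ∉ s) : mex s ≤ a := Nat.sInf_le h

lemma mem_of_lt_mex {s : Finset ℕ} {a : ℕ} (h : a < mex s) : a ∈ s := by
  by_contra hc
  exact absurd (mex_le hc) (not_le.mpr h)


lemma mex_pair_eq_zero {a b : ℕ} (ha : a ≠ 0) (hb : b ≠ 0) : mex {a, b} = 0 := by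
  have : (0:ℕ) ∉ ({a, b} : Finset ℕ) := by simp [Ne.symm ha, Ne.symm hb]
  exact Nat.le_zero.mp (mex_le this)

lemma mex_pair_ne_of_mem {a b c : ℕ} (h : c ∈ ({a,b} : Finset ℕ)) : mex {a, b} ≠ c := by
  intro hc; exact mex_notMem _ (hc ▸ h)

lemma mex_pair_eq_one {a b : ℕ} (h0 : a = 0 ∨ b = 0) (ha : a ≠ 1) (hb : b ≠ 1) :
    mex {a, b} = 1 := by
  have h1 : (1:ℕ) ∉ ({a, b} : Finset ℕ) := by simp [Ne.symm ha, Ne.symm hb]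
  have hle := mex_le h1
  have hne : mex {a, b} ≠ 0 := by
    apply mex_pair_ne_of_mem
    rcases h0 with h | h <;> simp [h]
  omega

lemma mex_pair_eq_two {a b : ℕ} (h0 : a = 0 ∨ b = 0) (h1 : a = 1 ∨ b = 1) :
    mex {a, b} = 2 := by
  have h2 : (2:ℕ) ∉ ({a, b} : Finset ℕ) := by
    rcases h0 with h | h <;> rcases h1 with h' | h' <;> simp [h, h'] <;> omega
  have hle := mex_le h2
  have hne0 : mex {a, b} ≠ 0 := by
    apply mex_pair_ne_of_mem; rcases h0 with h | h <;> simp [h]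
  have hne1 : mex {a, b} ≠ 1 := by
    apply mex_pair_ne_of_mem; rcases h1 with h | h <;> simp [h]
  omega

lemma SGL_unfold {l : List ℕ} (h : l ≠ []) :
    SGL l = mex {SGL (Subpart l 1 0), SGL (Subpart l 0 1)} := by
  cases l with
  | nil => exact absurd rfl h
  | cons a t => rw [SGL]

/-- composing the j-shift -/
lemma subpart_shift (m : List ℕ) (j : ℕ) :
    (((m.map (· - j)).filter (fun x => x ≠ 0)).map (· - 1)).filter (fun x => x ≠ 0)
      = (m.map (· - (j+1))).filter (fun x => x ≠ 0) := by
  induction m with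
  | nil => simp
  | cons a t ih =>
    simp only [List.map_cons, List.filter_cons, decide_eq_true_eq]
    by_cases h : a - j = 0
    · rw [if_neg (by simp [h])]
      have h2 : a - (j+1) = 0 := by omega
      rw [if_neg (by simp [h2])]
      exact ih
    · rw [if_pos (by simp [h])]
      simp only [List.map_cons, List.filter_cons, decide_eq_true_eq]
      have hss : a - j - 1 = a - (j+1) := by omega
      rw [hss]
      by_cases h2 : a - (j+1) = 0
      · rw [if_neg (by simp [h2]), if_neg (by simp [h2])]; exact ih
      · rw [if_pos (by simp [h2]), if_pos (by simp [h2])]; rw [ih]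

lemma E2 (l : List ℕ) (i j : ℕ) :
    Subpart (Subpart l i j) 0 1 = Subpart l i (j+1) := by
  simpa [Subpart] using subpart_shift (l.drop i) j

lemma filter_ne0_idem (m : List ℕ) :
    (m.filter (fun x => x ≠ 0)).filter (fun x => x ≠ 0) = m.filter (fun x => x ≠ 0) := by
  simp [List.filter_filter]

lemma E1_core (m : List ℕ) (j : ℕ) (hs : m.Pairwise (· ≥ ·)) :
    (((m.map (· - j)).filter (fun x => x ≠ 0)).drop 1).filter (fun x => x ≠ 0)
      = ((m.drop 1).map (· - j)).filter (fun x => x ≠ 0) := by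
  cases m with
  | nil => simp
  | cons a t =>
    simp only [List.map_cons, List.filter_cons, decide_eq_true_eq, List.drop_one,
      List.tail_cons]
    by_cases h : a - j = 0
    · rw [if_neg (by simp [h])]
      have hnil : (t.map (· - j)).filter (fun x => x ≠ 0) = [] := by
        rw [List.filter_eq_nil_iff]
        intro x hx
        simp only [List.mem_map] at hx
        obtain ⟨b, hb, rfl⟩ := hx
        have : b ≤ a := (List.pairwise_cons.mp hs).1 b hb
        simp; omega
      rw [hnil]; simp
    · rw [if_pos (by simp [h])]
      simp only [List.tail_cons]
      exact filter_ne0_idem _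

lemma E1 (l : List ℕ) (i j : ℕ) (hs : l.Pairwise (· ≥ ·)) :
    Subpart (Subpart l i j) 1 0 = Subpart l (i+1) j := by
  have hd : l.drop (i+1) = (l.drop i).drop 1 := by
    rw [List.drop_drop]
  have hsort : (l.drop i).Pairwise (· ≥ ·) := hs.drop  -- may not exist
  simp only [Subpart, hd]
  have : (fun x : ℕ => x - 0) = id := by funext x; simp
  rw [this, List.map_id]
  exact E1_core (l.drop i) j hsort


lemma isPartition_subpart {l : List ℕ} (hp : IsPartition l) (i j : ℕ) :
    IsPartition (Subpart l i j) := by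
  constructor
  · apply List.Pairwise.filter
    apply List.Pairwise.map
    · exact fun a b h => Nat.sub_le_sub_right h j
    · exact hp.1.drop
  · intro x hx
    have := List.of_mem_filter hx
    simp at this
    omega

lemma sorted_getD_mono {l : List ℕ} (hs : l.Pairwise (· ≥ ·)) {a b : ℕ}
    (hab : a ≤ b) (hb : b < l.length) : l.getD b 0 ≤ l.getD a 0 := by
  rw [List.getD_eq_getElem _ _ hb, List.getD_eq_getElem _ _ (lt_of_le_of_lt hab hb)]
  rcases eq_or_lt_of_le hab with rfl | h
  · exact le_refl _
  · exact List.pairwise_iff_getElem.mp hs a b _ hb h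

lemma durfee_spec {l : List ℕ} (h : 1 ≤ durfee l) :
    durfee l ≤ l.getD (durfee l - 1) 0 :=
by
  have := Nat.findGreatest_of_ne_zero
    (P := fun k => k ≤ l.getD (k-1) 0) (n := l.length) (m := durfee l) rfl (by omega)
  exact this

lemma durfee_getD {l : List ℕ} (hp : IsPartition l) {k : ℕ} (hk : k + 1 ≤ durfee l) :
    k + 1 ≤ l.getD k 0 ∧ k < l.length := by
  have hlen : durfee l ≤ l.length := Nat.findGreatest_le _
  have hspec := durfee_spec (by omega : 1 ≤ durfee l)
  have hmono := sorted_getD_mono hp.1 (by omega : k ≤ durfee l - 1)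
    (by omega : durfee l - 1 < l.length)
  constructor
  · omega
  · omega

lemma durfee_two_struct {l : List ℕ} (hp : IsPartition l) (h : 2 ≤ durfee l) :
    ∃ a b rest, l = a :: b :: rest ∧ 2 ≤ b ∧ b ≤ a := by
  obtain ⟨hb2, hblen⟩ := durfee_getD hp (by omega : 1 + 1 ≤ durfee l)
  match l, hblen with
  | a :: b :: rest, _ =>
    refine ⟨a, b, rest, rfl, ?_, ?_⟩
    · simpa using hb2
    · exact (List.pairwise_cons.mp hp.1).1 b (by simp)

lemma durfee_three_struct {l : List ℕ} (hp : IsPartition l) (h : 3 ≤ durfee l) :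
    ∃ a b c rest, l = a :: b :: c :: rest ∧ 3 ≤ c ∧ c ≤ b ∧ b ≤ a := by
  obtain ⟨hc3, hclen⟩ := durfee_getD hp (by omega : 2 + 1 ≤ durfee l)
  match l, hclen with
  | a :: b :: c :: rest, _ =>
    refine ⟨a, b, c, rest, rfl, ?_, ?_, ?_⟩
    · simpa using hc3
    · exact (List.pairwise_cons.mp (List.pairwise_cons.mp hp.1).2).1 c (by simp)
    · exact (List.pairwise_cons.mp hp.1).1 b (by simp)

lemma durfee_ge_two_of (l : List ℕ) {a b : ℕ} (h2 : 2 ≤ b) (hlen : 2 ≤ (a :: b :: l).length := by simp)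
    : 2 ≤ durfee (a :: b :: l) := by
  apply Nat.le_findGreatest (by simp)
  simpa using h2

lemma subpart_ne_nil_mono {l : List ℕ} {i j i' j' : ℕ} (hi : i' ≤ i) (hj : j' ≤ j)
    (h : Subpart l i j ≠ []) : Subpart l i' j' ≠ [] := by
  obtain ⟨x, hx⟩ := List.exists_mem_of_ne_nil _ h
  simp only [Subpart, List.mem_filter, List.mem_map, decide_eq_true_eq] at hx
  obtain ⟨⟨b, hb, rfl⟩, hbne⟩ := hx
  have hb' : b ∈ l.drop i' := by
    have : l.drop i = (l.drop i').drop (i - i') := by rw [List.drop_drop]; congr 1; omega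
    rw [this] at hb
    exact List.drop_subset _ _ hb
  apply List.ne_nil_of_mem (a := b - j')
  simp only [Subpart, List.mem_filter, List.mem_map, decide_eq_true_eq]
  exact ⟨⟨b, hb', rfl⟩, by omega⟩

lemma subpart10_two_ne {a b rest} (hb : b ≠ 0) : Subpart (a::b::rest) 1 0 ≠ [] := by
  simp [Subpart, List.filter_cons, hb]

lemma subpart01_one_ne {a rest} (ha : 2 ≤ a) : Subpart (a::rest) 0 1 ≠ [] := by
  have : a - 1 ≠ 0 := by omega
  simp [Subpart, List.filter_cons, this]

lemma stmt12_aux (l : List ℕ) (hp : IsPartition l) :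
    ∀ n i j, 1 ≤ i → 1 ≤ j → Subpart l i j ≠ [] →
      (Subpart l (i-1) (j-1)).sum + (Subpart l (i-1) (j-1)).length ≤ n →
      (SGL (Subpart l i j) = 0 → SGL (Subpart l (i - 1) (j - 1)) = 0) ∧
      (SGL (Subpart l i j) = 1 → 2 ≤ durfee (Subpart l i j) →
        SGL (Subpart l (i - 1) (j - 1)) = 1) ∧
      (SGL (Subpart l i j) = 2 → 3 ≤ durfee (Subpart l i j) →
        SGL (Subpart l (i - 1) (j - 1)) = 2) := by
  intro n
  induction n using Nat.strong_induction_on with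
  | _ n IH =>
  intro i j hi hj hne hsize
  have hs := hp.1
  have hii : i - 1 + 1 = i := by omega
  have hjj : j - 1 + 1 = j := by omega
  -- nonemptiness
  have hAne : Subpart l i (j-1) ≠ [] := subpart_ne_nil_mono le_rfl (by omega) hne
  have hBne : Subpart l (i-1) j ≠ [] := subpart_ne_nil_mono (by omega) le_rfl hne
  have hμne : Subpart l (i-1) (j-1) ≠ [] := subpart_ne_nil_mono (by omega) (by omega) hne
  -- identities
  have eA : Subpart (Subpart l (i-1) (j-1)) 1 0 = Subpart l i (j-1) := by
    rw [E1 l (i-1) (j-1) hs, hii]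
  have eB : Subpart (Subpart l (i-1) (j-1)) 0 1 = Subpart l (i-1) j := by
    rw [E2 l (i-1) (j-1), hjj]
  have eAν : Subpart (Subpart l i (j-1)) 0 1 = Subpart l i j := by
    rw [E2 l i (j-1), hjj]
  have eBν : Subpart (Subpart l (i-1) j) 1 0 = Subpart l i j := by
    rw [E1 l (i-1) j hs, hii]
  have eν10 : Subpart (Subpart l i j) 1 0 = Subpart l (i+1) j := E1 l i j hs
  have eν01 : Subpart (Subpart l i j) 0 1 = Subpart l i (j+1) := E2 l i j
  -- SGL unfoldings
  have hμeq : SGL (Subpart l (i-1) (j-1))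
      = mex {SGL (Subpart l i (j-1)), SGL (Subpart l (i-1) j)} := by
    rw [SGL_unfold hμne, eA, eB]
  have hAeq : SGL (Subpart l i (j-1))
      = mex {SGL (Subpart (Subpart l i (j-1)) 1 0), SGL (Subpart l i j)} := by
    rw [SGL_unfold hAne, eAν]
  have hBeq : SGL (Subpart l (i-1) j)
      = mex {SGL (Subpart l i j), SGL (Subpart (Subpart l (i-1) j) 0 1)} := by
    rw [SGL_unfold hBne, eBν]
  have hνeq : SGL (Subpart l i j)
      = mex {SGL (Subpart l (i+1) j), SGL (Subpart l i (j+1))} := by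
    rw [SGL_unfold hne, eν10, eν01]
  -- measures
  obtain ⟨aμ, tμ, hμcons⟩ : ∃ a t, Subpart l (i-1) (j-1) = a :: t := by
    cases h : Subpart l (i-1) (j-1) with
    | nil => exact absurd h hμne
    | cons a t => exact ⟨a, t, rfl⟩
  have sizeA : (Subpart l i (j-1)).sum + (Subpart l i (j-1)).length < n := by
    have h10 := subpart10_lt aμ tμ
    rw [← hμcons, eA] at h10
    omega
  have sizeB : (Subpart l (i-1) j).sum + (Subpart l (i-1) j).length < n := by
    have h01 := subpart01_lt aμ tμ
    rw [← hμcons, eB] at h01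
    omega
  refine ⟨?_, ?_, ?_⟩
  · -- SGL ν = 0
    intro h0
    rw [hμeq]
    apply mex_pair_eq_zero
    · rw [hAeq, h0]
      exact mex_pair_ne_of_mem (by simp)
    · rw [hBeq, h0]
      exact mex_pair_ne_of_mem (by simp)
  · -- SGL ν = 1, durfee ≥ 2
    intro h1 hd
    have hνpart := isPartition_subpart hp i j
    obtain ⟨a, b, rest, hν, hb2, hba⟩ := durfee_two_struct hνpart hd
    have h10ne : Subpart l (i+1) j ≠ [] := by
      rw [← eν10, hν]; exact subpart10_two_ne (by omega)
    have h01ne : Subpart l i (j+1) ≠ [] := by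
      rw [← eν01, hν]; exact subpart01_one_ne (by omega)
    have hA1 : SGL (Subpart l i (j-1)) ≠ 1 := by
      rw [hAeq, h1]; exact mex_pair_ne_of_mem (by simp)
    have hB1 : SGL (Subpart l (i-1) j) ≠ 1 := by
      rw [hBeq, h1]; exact mex_pair_ne_of_mem (by simp)
    rw [hνeq] at h1
    have h0mem : (0:ℕ) ∈ ({SGL (Subpart l (i+1) j), SGL (Subpart l i (j+1))} : Finset ℕ) :=
      mem_of_lt_mex (by rw [h1]; norm_num)
    simp only [Finset.mem_insert, Finset.mem_singleton] at h0mem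
    rw [hμeq]
    apply mex_pair_eq_one ?_ hA1 hB1
    rcases h0mem with hx | hy
    · left
      have := (IH _ sizeA (i+1) j (by omega) hj h10ne
        (by simp only [Nat.add_sub_cancel]; exact le_refl _)).1 hx.symm
      simpa using this
    · right
      have := (IH _ sizeB i (j+1) hi (by omega) h01ne
        (by simp only [Nat.add_sub_cancel]; exact le_refl _)).1 hy.symm
      simpa using this
  · -- SGL ν = 2, durfee ≥ 3
    intro h2 hd
    have hνpart := isPartition_subpart hp i j
    obtain ⟨a, b, c, rest, hν, hc3, hcb, hba⟩ := durfee_three_struct hνpart hd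
    have h10ne : Subpart l (i+1) j ≠ [] := by
      rw [← eν10, hν]; exact subpart10_two_ne (by omega)
    have h01ne : Subpart l i (j+1) ≠ [] := by
      rw [← eν01, hν]; exact subpart01_one_ne (by omega)
    have hd10 : 2 ≤ durfee (Subpart l (i+1) j) := by
      rw [← eν10, hν]
      have hb0 : ¬ (b - 0 = 0) := by omega
      have hc0 : ¬ (c - 0 = 0) := by omega
      simp only [Subpart, List.drop_one, List.tail_cons, List.map_cons, List.filter_cons,
        decide_eq_true_eq, if_pos hb0, if_pos hc0]
      exact durfee_ge_two_of _ (by omega)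
    have hd01 : 2 ≤ durfee (Subpart l i (j+1)) := by
      rw [← eν01, hν]
      have ha0 : ¬ (a - 1 = 0) := by omega
      have hb0 : ¬ (b - 1 = 0) := by omega
      simp only [Subpart, List.drop_zero, List.map_cons, List.filter_cons,
        decide_eq_true_eq, if_pos ha0, if_pos hb0]
      exact durfee_ge_two_of _ (by omega)
    rw [hνeq] at h2
    have h0mem : (0:ℕ) ∈ ({SGL (Subpart l (i+1) j), SGL (Subpart l i (j+1))} : Finset ℕ) :=
      mem_of_lt_mex (by rw [h2]; norm_num)
    have h1mem : (1:ℕ) ∈ ({SGL (Subpart l (i+1) j), SGL (Subpart l i (j+1))} : Finset ℕ) :=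
      mem_of_lt_mex (by rw [h2]; norm_num)
    simp only [Finset.mem_insert, Finset.mem_singleton] at h0mem h1mem
    rw [hμeq]
    rcases h0mem with hx0 | hy0
    · have hy1 : SGL (Subpart l i (j+1)) = 1 := by
        rcases h1mem with h | h
        · omega
        · omega
      have hA0 := (IH _ sizeA (i+1) j (by omega) hj h10ne
        (by simp only [Nat.add_sub_cancel]; exact le_refl _)).1 hx0.symm
      have hB1 := (IH _ sizeB i (j+1) hi (by omega) h01ne
        (by simp only [Nat.add_sub_cancel]; exact le_refl _)).2.1 hy1 hd01
      simp only [Nat.add_sub_cancel] at hA0 hB1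
      rw [hA0, hB1] at *
      exact mex_pair_eq_two (Or.inl hA0) (Or.inr hB1)
    · have hx1 : SGL (Subpart l (i+1) j) = 1 := by
        rcases h1mem with h | h
        · omega
        · omega
      have hA1 := (IH _ sizeA (i+1) j (by omega) hj h10ne
        (by simp only [Nat.add_sub_cancel]; exact le_refl _)).2.1 hx1 hd10
      have hB0 := (IH _ sizeB i (j+1) hi (by omega) h01ne
        (by simp only [Nat.add_sub_cancel]; exact le_refl _)).1 hy0.symm
      simp only [Nat.add_sub_cancel] at hA1 hB0
      exact mex_pair_eq_two (Or.inr hB0) (Or.inl hA1)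

/-- propagation of Sprague–Grundy values of LCTR along diagonals. -/
theorem stmt12 (l : List ℕ) (hp : IsPartition l) (i j : ℕ) (hi : 1 ≤ i) (hj : 1 ≤ j)
    (hne : Subpart l i j ≠ []) :
    (SGL (Subpart l i j) = 0 → SGL (Subpart l (i - 1) (j - 1)) = 0) ∧
    (SGL (Subpart l i j) = 1 → 2 ≤ durfee (Subpart l i j) →
      SGL (Subpart l (i - 1) (j - 1)) = 1) ∧
    (SGL (Subpart l i j) = 2 → 3 ≤ durfee (Subpart l i j) →
      SGL (Subpart l (i - 1) (j - 1)) = 2) := by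
  exact stmt12_aux l hp ((Subpart l (i-1) (j-1)).sum + (Subpart l (i-1) (j-1)).length)
    i j hi hj hne le_rfl
end

section
/- For all integers r ≥ 1 and c ≥ 1, the Sprague–Grundy value of the LCTR game on the rectangular partition R_{r,c} equals 0 if c > 1 and r > 1 and c + r is even; equals 2 if (c ≤ 2 or r ≤ 2) and c + r is odd; and equals 1 otherwise. -/

lemma mex_eq_s14 (s : Finset ℕ) (n : ℕ) (h1 : n ∉ s) (h2 : ∀ m < n, m ∈ s) : mex s = n := by
  unfold mex
  apply le_antisymm
  · exact Nat.sInf_le h1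
  · apply le_csInf ⟨n, h1⟩
    intro m hm
    by_contra h
    exact hm (h2 m (by omega))

lemma sgl_cons (a : ℕ) (t : List ℕ) :
    SGL (a :: t) = mex {SGL (Subpart (a :: t) 1 0), SGL (Subpart (a :: t) 0 1)} := by
  rw [SGL]

lemma sub10 (r c : ℕ) (hc : 1 ≤ c) :
    Subpart (c :: List.replicate r c) 1 0 = List.replicate r c := by
  unfold Subpart
  simp only [List.drop_succ_cons, List.drop_zero]
  rw [show (fun x => x - 0) = id from funext fun x => by simp, List.map_id]
  apply List.filter_eq_self.mpr
  intro a ha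
  have := List.eq_of_mem_replicate ha
  simp [this]; omega

lemma sub01 (r c : ℕ) :
    Subpart (List.replicate r c) 0 1
      = if c ≤ 1 then [] else List.replicate r (c - 1) := by
  unfold Subpart
  rw [List.drop_zero, List.map_replicate]
  by_cases h : c ≤ 1
  · rw [if_pos h]
    apply List.filter_eq_nil_iff.mpr
    intro a ha
    have := List.eq_of_mem_replicate ha
    simp [this]; omega
  · rw [if_neg h]
    apply List.filter_eq_self.mpr
    intro a ha
    have := List.eq_of_mem_replicate ha
    simp [this]; omega

lemma sgl_nil : SGL [] = 0 := by rw [SGL]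

lemma mexab (a b : ℕ) (ha : a ≤ 2) (hb : b ≤ 2) :
    mex {a, b} = if a ≠ 0 ∧ b ≠ 0 then 0 else if a ≠ 1 ∧ b ≠ 1 then 1 else 2 := by
  interval_cases a <;> interval_cases b <;>
    exact mex_eq_s14 _ _ (by decide) (by decide)

/-- mod-2 form of the claimed SG value. -/
def F (r c : ℕ) : ℕ :=
  if 1 < c ∧ 1 < r ∧ (c + r) % 2 = 0 then 0
  else if (c ≤ 2 ∨ r ≤ 2) ∧ (c + r) % 2 = 1 then 2
  else 1

lemma F_le (r c : ℕ) : F r c ≤ 2 := by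
  unfold F; split_ifs <;> omega

lemma key : ∀ n r c, r + c ≤ n → 1 ≤ r → 1 ≤ c → SGL (rectPart r c) = F r c := by
  intro n
  induction n with
  | zero => intro r c h hr hc; omega
  | succ n ih =>
    intro r c h hr hc
    obtain ⟨r', rfl⟩ : ∃ r', r = r' + 1 := ⟨r - 1, by omega⟩
    obtain ⟨c', rfl⟩ : ∃ c', c = c' + 1 := ⟨c - 1, by omega⟩
    have hrect : rectPart (r' + 1) (c' + 1) = (c' + 1) :: List.replicate r' (c' + 1) := rfl
    rw [hrect, sgl_cons, sub10 _ _ (by omega), ← List.replicate_succ, sub01]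
    rcases Nat.eq_zero_or_pos r' with hr0 | hr1
    · subst hr0
      simp only [List.replicate_zero, sgl_nil]
      rcases Nat.eq_zero_or_pos c' with hc0 | hc1
      · subst hc0
        rw [if_pos (by omega), sgl_nil, mexab 0 0 (by omega) (by omega)]
        simp only [F]; norm_num
      · simp only [if_neg (show ¬ (c'+1 ≤ 1) by omega), Nat.add_sub_cancel]
        rw [show List.replicate (0 + 1) c' = rectPart 1 c' from rfl,
          ih 1 c' (by omega) (by omega) hc1,
          mexab 0 _ (by omega) (F_le 1 c')]
        simp only [F]; split_ifs <;> omega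
    · have hA : SGL (List.replicate r' (c' + 1)) = F r' (c' + 1) :=
        ih r' (c' + 1) (by omega) hr1 (by omega)
      rw [hA]
      rcases Nat.eq_zero_or_pos c' with hc0 | hc1
      · subst hc0
        rw [if_pos (by omega), sgl_nil, mexab _ 0 (F_le r' 1) (by omega)]
        simp only [F]; split_ifs <;> omega
      · simp only [if_neg (show ¬ (c'+1 ≤ 1) by omega), Nat.add_sub_cancel]
        rw [show List.replicate (r' + 1) c' = rectPart (r' + 1) c' from rfl,
          ih (r' + 1) c' (by omega) (by omega) hc1,
          mexab _ _ (F_le r' (c' + 1)) (F_le (r' + 1) c')]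
        simp only [F]; split_ifs <;> omega


/-- Sprague–Grundy values of LCTR on rectangular partitions. -/
theorem stmt14 (r c : ℕ) (hr : 1 ≤ r) (hc : 1 ≤ c) :
    SGL (rectPart r c) =
      if 1 < c ∧ 1 < r ∧ Even (c + r) then 0
      else if (c ≤ 2 ∨ r ≤ 2) ∧ Odd (c + r) then 2
      else 1 := by
  rw [key (r + c) r c le_rfl hr hc]
  simp only [F, Nat.even_iff, Nat.odd_iff]
end
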